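/- Let 0 < α ≤ 1, a ≥ 1, q ≥ 1, and let φ : [0,1] → [0,1] be increasing and concave with φ(0) = 0, φ(1) = 1, and φ(t) ≤ a·t^α for all t ∈ [0,1]. Then Γ := sup_{0 < t ≤ 1} (1/φ(t))·Σ_{j=1}^∞ j^{(1/q)-1}·φ(t^j/j!) ≤ 5a/α. -/

import Mathlib

set_option maxHeartbeats 1000000 in
lemma two_pow_pred_le_factorial : ∀ j : ℕ, 2 ^ (j - 1) ≤ Nat.factorial j := by
  intro j
  induction j with
  | zero => simp [Nat.factorial]
  | succ n ih =>
    cases n with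
    | zero => simp [Nat.factorial]
    | succ m =>
      have : 2 ^ (m + 2 - 1) = 2 * 2 ^ (m + 1 - 1) := by
        simp [pow_succ]; ring
      rw [this, Nat.factorial_succ]
      have h2 : 2 ≤ m + 2 := by omega
      calc 2 * 2 ^ (m + 1 - 1) ≤ 2 * Nat.factorial (m+1) := by
            exact Nat.mul_le_mul_left 2 ih
        _ ≤ (m + 2) * Nat.factorial (m+1) := Nat.mul_le_mul_right _ h2

set_option maxHeartbeats 2000000 in
theorem lemma11 (α a q : ℝ) (hα0 : 0 < α) (hα1 : α ≤ 1) (ha : 1 ≤ a) (hq : 1 ≤ q)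
    (φ : ℝ → ℝ) (hmono : MonotoneOn φ (Set.Icc (0:ℝ) 1))
    (hconc : ConcaveOn ℝ (Set.Icc (0:ℝ) 1) φ)
    (h0 : φ 0 = 0) (h1 : φ 1 = 1)
    (hbound : ∀ t ∈ Set.Icc (0:ℝ) 1, φ t ≤ a * t ^ α) :
    ∀ t ∈ Set.Ioc (0:ℝ) 1, ∀ N : ℕ,
      ∑ j ∈ Finset.Icc 1 N,
          (j : ℝ) ^ ((1 / q) - 1) * φ (t ^ j / (Nat.factorial j : ℝ))
        ≤ (5 * a / α) * φ t := by
  rintro t ⟨ht0, ht1⟩ N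
  have ha0 : (0:ℝ) < a := lt_of_lt_of_le one_pos ha
  set J : ℕ := ⌈1/α⌉₊ with hJdef
  have hαinv : (1:ℝ) ≤ 1/α := by
    rw [le_div_iff₀ hα0]; linarith
  have hJge : (1:ℝ)/α ≤ J := Nat.le_ceil _
  have hJle : (J:ℝ) ≤ 2/α := by
    have := Nat.ceil_lt_add_one (le_of_lt (by positivity : (0:ℝ) < 1/α))
    have heq : (2:ℝ)/α = 1/α + 1/α := by ring
    have h2 : (1:ℝ)/α + 1 ≤ 2/α := by rw [heq]; linarith
    linarith
  -- membership in Icc 0 1 of the arguments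
  have hmem : ∀ j : ℕ, 1 ≤ j → t ^ j / (Nat.factorial j : ℝ) ∈ Set.Icc (0:ℝ) 1 := by
    intro j hj
    have hf1 : (1:ℝ) ≤ (Nat.factorial j : ℝ) := by
      exact_mod_cast Nat.one_le_iff_ne_zero.mpr (Nat.factorial_ne_zero j)
    have hf0 : (0:ℝ) < (Nat.factorial j : ℝ) := lt_of_lt_of_le one_pos hf1
    constructor
    · positivity
    · rw [div_le_one hf0]
      calc t ^ j ≤ 1 := pow_le_one₀ ht0.le ht1
        _ ≤ _ := hf1
  have hxle : ∀ j : ℕ, 1 ≤ j → t ^ j / (Nat.factorial j : ℝ) ≤ t := by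
    intro j hj
    have hf1 : (1:ℝ) ≤ (Nat.factorial j : ℝ) := by
      exact_mod_cast Nat.one_le_iff_ne_zero.mpr (Nat.factorial_ne_zero j)
    calc t ^ j / (Nat.factorial j : ℝ) ≤ t ^ j / 1 := by
          apply div_le_div_of_nonneg_left _ one_pos hf1 <;> positivity
      _ = t ^ j := div_one _
      _ ≤ t := by
          calc t ^ j ≤ t ^ 1 := pow_le_pow_of_le_one ht0.le ht1 hj
            _ = t := pow_one t
  have htmem : t ∈ Set.Icc (0:ℝ) 1 := ⟨ht0.le, ht1⟩
  have hφ0le : ∀ x ∈ Set.Icc (0:ℝ) 1, 0 ≤ φ x := by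
    intro x hx
    have := hmono (Set.left_mem_Icc.mpr one_pos.le) hx hx.1
    rwa [h0] at this
  have hφt0 : 0 ≤ φ t := hφ0le t htmem
  have hφtt : t ≤ φ t := by
    have := hconc.2 (Set.left_mem_Icc.mpr one_pos.le) (Set.right_mem_Icc.mpr one_pos.le)
      (by linarith : (0:ℝ) ≤ 1 - t) ht0.le (by ring)
    simp only [smul_eq_mul, mul_zero, mul_one, zero_add, h0, h1] at this
    linarith
  -- pointwise facts about terms
  have hpow_le_one : ∀ j : ℕ, 1 ≤ j → (j:ℝ) ^ ((1/q) - 1) ≤ 1 := by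
    intro j hj
    apply Real.rpow_le_one_of_one_le_of_nonpos
    · exact_mod_cast hj
    · have : 1/q ≤ 1 := by
        rw [div_le_one (by linarith : (0:ℝ) < q)]; exact hq
      linarith
  have hterm_nonneg : ∀ j : ℕ, 1 ≤ j →
      0 ≤ (j:ℝ) ^ ((1/q) - 1) * φ (t ^ j / (Nat.factorial j : ℝ)) := by
    intro j hj
    apply mul_nonneg (Real.rpow_nonneg (Nat.cast_nonneg j) _)
    exact hφ0le _ (hmem j hj)
  have hterm_le : ∀ j : ℕ, 1 ≤ j →
      (j:ℝ) ^ ((1/q) - 1) * φ (t ^ j / (Nat.factorial j : ℝ)) ≤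
        φ (t ^ j / (Nat.factorial j : ℝ)) := by
    intro j hj
    have := hφ0le _ (hmem j hj)
    nlinarith [hpow_le_one j hj]
  -- split the sum
  set f : ℕ → ℝ := fun j => (j:ℝ) ^ ((1/q) - 1) * φ (t ^ j / (Nat.factorial j : ℝ)) with hf
  have hsubset : Finset.Icc 1 N ⊆ Finset.Icc 1 J ∪ Finset.Icc (J+1) N := by
    intro j hj
    rw [Finset.mem_Icc] at hj
    rcases le_or_gt j J with h | h
    · exact Finset.mem_union_left _ (Finset.mem_Icc.mpr ⟨hj.1, h⟩)
    · exact Finset.mem_union_right _ (Finset.mem_Icc.mpr ⟨h, hj.2⟩)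
  have hdisj : Disjoint (Finset.Icc 1 J) (Finset.Icc (J+1) N) := by
    apply Finset.disjoint_left.mpr
    intro j hj hj'
    rw [Finset.mem_Icc] at hj hj'
    omega
  have hsplit : ∑ j ∈ Finset.Icc 1 N, f j ≤
      ∑ j ∈ Finset.Icc 1 J, f j + ∑ j ∈ Finset.Icc (J+1) N, f j := by
    rw [← Finset.sum_union hdisj]
    apply Finset.sum_le_sum_of_subset_of_nonneg hsubset
    intro j hj _
    rcases Finset.mem_union.mp hj with h | h
    · exact hterm_nonneg j (Finset.mem_Icc.mp h).1
    · have := (Finset.mem_Icc.mp h).1; exact hterm_nonneg j (by omega)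
  -- head bound
  have hhead : ∑ j ∈ Finset.Icc 1 J, f j ≤ (2/α) * φ t := by
    calc ∑ j ∈ Finset.Icc 1 J, f j ≤ ∑ j ∈ Finset.Icc 1 J, φ t := by
          apply Finset.sum_le_sum
          intro j hj
          have hj1 := (Finset.mem_Icc.mp hj).1
          exact le_trans (hterm_le j hj1)
            (hmono (hmem j hj1) htmem (hxle j hj1))
      _ = (Finset.Icc 1 J).card * φ t := by rw [Finset.sum_const, nsmul_eq_mul]
      _ = (J : ℝ) * φ t := by rw [Nat.card_Icc]; norm_num
      _ ≤ (2/α) * φ t := by apply mul_le_mul_of_nonneg_right hJle hφt0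
  -- tail: geometric
  set r : ℝ := (2:ℝ) ^ (-α) with hr
  have hr0 : 0 ≤ r := Real.rpow_nonneg (by norm_num) _
  have hr1 : r < 1 := Real.rpow_lt_one_of_one_lt_of_neg one_lt_two (by linarith)
  have hlog2 : (0.6931471803 : ℝ) < Real.log 2 := Real.log_two_gt_d9
  have hlog2' : Real.log 2 < 0.6931471808 := Real.log_two_lt_d9
  have h2α : (1:ℝ) + α * Real.log 2 ≤ (2:ℝ) ^ α := by
    have := Real.add_one_le_exp (α * Real.log 2)
    rw [Real.rpow_def_of_pos (by norm_num : (0:ℝ) < 2)]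
    calc (1:ℝ) + α * Real.log 2 = α * Real.log 2 + 1 := by ring
      _ ≤ Real.exp (α * Real.log 2) := this
      _ = Real.exp (Real.log 2 * α) := by ring_nf
  have h2αpos : (0:ℝ) < (2:ℝ) ^ α := Real.rpow_pos_of_pos (by norm_num) _
  have hrinv : r = ((2:ℝ) ^ α)⁻¹ := Real.rpow_neg (by norm_num) α
  have h1r : α * Real.log 2 / 2 ≤ 1 - r := by
    have hden : (0:ℝ) < 1 + α * Real.log 2 := by nlinarith
    have hrle : r ≤ (1 + α * Real.log 2)⁻¹ := by
      rw [hrinv]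
      exact inv_anti₀ hden h2α
    have heq2 : (1:ℝ) - (1 + α * Real.log 2)⁻¹ = α * Real.log 2 / (1 + α * Real.log 2) := by
      field_simp
      ring
    have hd2 : 1 + α * Real.log 2 ≤ 2 := by nlinarith
    have hdd : α * Real.log 2 / 2 ≤ α * Real.log 2 / (1 + α * Real.log 2) := by
      apply div_le_div_of_nonneg_left _ hden hd2
      nlinarith
    linarith
  -- r ^ J ≤ 1/2
  have hrJ : r ^ J ≤ 1/2 := by
    have h1 : r ^ J = (2:ℝ) ^ (-α * (J:ℝ)) := by
      rw [hr, ← Real.rpow_natCast ((2:ℝ) ^ (-α)) J, ← Real.rpow_mul (by norm_num : (0:ℝ) ≤ 2)]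
    have h2 : -α * (J:ℝ) ≤ -1 := by
      have : (1:ℝ) ≤ α * J := by
        have := hJge
        calc (1:ℝ) = α * (1/α) := by field_simp
          _ ≤ α * J := by apply mul_le_mul_of_nonneg_left hJge hα0.le
      nlinarith
    calc r ^ J = (2:ℝ) ^ (-α * (J:ℝ)) := h1
      _ ≤ (2:ℝ) ^ (-1 : ℝ) := Real.rpow_le_rpow_of_exponent_le one_le_two h2
      _ = 1/2 := by
          rw [Real.rpow_neg_one]; norm_num
  -- geometric sum bound
  have hgeom : ∀ M : ℕ, ∑ i ∈ Finset.range M, r ^ i ≤ (1 - r)⁻¹ := by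
    intro M
    have hsummable : Summable (fun i : ℕ => r ^ i) := summable_geometric_of_lt_one hr0 hr1
    calc ∑ i ∈ Finset.range M, r ^ i ≤ ∑' i : ℕ, r ^ i :=
          Summable.sum_le_tsum _ (fun i _ => pow_nonneg hr0 i) hsummable
      _ = (1 - r)⁻¹ := tsum_geometric_of_lt_one hr0 hr1
  have hgeomtail : ∑ j ∈ Finset.Icc (J+1) N, r ^ (j-1) ≤ r ^ J * (1 - r)⁻¹ := by
    rw [← Finset.Ico_add_one_right_eq_Icc, Finset.sum_Ico_eq_sum_range]
    have heq : ∀ i ∈ Finset.range (N + 1 - (J+1)), r ^ (J + 1 + i - 1) = r ^ J * r ^ i := by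
      intro i _
      have : J + 1 + i - 1 = J + i := by omega
      rw [this, pow_add]
    rw [Finset.sum_congr rfl heq, ← Finset.mul_sum]
    exact mul_le_mul_of_nonneg_left (hgeom _) (pow_nonneg hr0 J)
  -- tail term bound
  have htailterm : ∀ j : ℕ, J + 1 ≤ j → f j ≤ a * φ t * r ^ (j-1) := by
    intro j hj
    have hj1 : 1 ≤ j := by omega
    have hx := hmem j hj1
    have step1 : f j ≤ a * (t ^ j / (Nat.factorial j : ℝ)) ^ α :=
      le_trans (hterm_le j hj1) (hbound _ hx)
    have h2j : ((2:ℝ)) ^ (j-1) ≤ (Nat.factorial j : ℝ) := by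
      exact_mod_cast two_pow_pred_le_factorial j
    have hxle2 : t ^ j / (Nat.factorial j : ℝ) ≤ t ^ j / 2 ^ (j-1) := by
      apply div_le_div_of_nonneg_left _ (by positivity) h2j
      positivity
    have step2 : (t ^ j / (Nat.factorial j : ℝ)) ^ α ≤ (t ^ j / 2 ^ (j-1)) ^ α :=
      Real.rpow_le_rpow (by positivity) hxle2 hα0.le
    have heqr : ((t ^ j / 2 ^ (j-1) : ℝ)) ^ α = t ^ ((j:ℝ) * α) * r ^ (j-1) := by
      rw [Real.div_rpow (by positivity) (by positivity)]
      rw [← Real.rpow_natCast t j, ← Real.rpow_natCast ((2:ℝ)) (j-1)]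
      rw [← Real.rpow_mul ht0.le, ← Real.rpow_mul (by norm_num : (0:ℝ) ≤ 2)]
      rw [← Real.rpow_natCast r (j-1), hr]
      rw [← Real.rpow_mul (by norm_num : (0:ℝ) ≤ 2)]
      rw [div_eq_mul_inv, ← Real.rpow_neg (by norm_num : (0:ℝ) ≤ 2)]
      ring_nf
    have hjα : (1:ℝ) ≤ (j:ℝ) * α := by
      have hjJ : (J:ℝ) ≤ (j:ℝ) := by exact_mod_cast Nat.le_of_succ_le hj
      have : (1:ℝ)/α ≤ (j:ℝ) := le_trans hJge hjJ
      calc (1:ℝ) = (1/α) * α := by field_simp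
        _ ≤ (j:ℝ) * α := by apply mul_le_mul_of_nonneg_right this hα0.le
    have htexp : t ^ ((j:ℝ) * α) ≤ φ t := by
      calc t ^ ((j:ℝ) * α) ≤ t ^ (1:ℝ) :=
            Real.rpow_le_rpow_of_exponent_ge ht0 ht1 hjα
        _ = t := Real.rpow_one t
        _ ≤ φ t := hφtt
    have hrpow_nonneg : (0:ℝ) ≤ r ^ (j-1) := pow_nonneg hr0 _
    calc f j ≤ a * (t ^ j / (Nat.factorial j : ℝ)) ^ α := step1
      _ ≤ a * (t ^ ((j:ℝ) * α) * r ^ (j-1)) := by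
          rw [← heqr]; exact mul_le_mul_of_nonneg_left step2 ha0.le
      _ ≤ a * (φ t * r ^ (j-1)) := by
          apply mul_le_mul_of_nonneg_left _ ha0.le
          exact mul_le_mul_of_nonneg_right htexp hrpow_nonneg
      _ = a * φ t * r ^ (j-1) := by ring
  have htail : ∑ j ∈ Finset.Icc (J+1) N, f j ≤ a * φ t * (r ^ J * (1 - r)⁻¹) := by
    calc ∑ j ∈ Finset.Icc (J+1) N, f j ≤ ∑ j ∈ Finset.Icc (J+1) N, a * φ t * r ^ (j-1) := by
          apply Finset.sum_le_sum
          intro j hj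
          exact htailterm j (Finset.mem_Icc.mp hj).1
      _ = a * φ t * ∑ j ∈ Finset.Icc (J+1) N, r ^ (j-1) := by rw [Finset.mul_sum]
      _ ≤ a * φ t * (r ^ J * (1 - r)⁻¹) := by
          apply mul_le_mul_of_nonneg_left hgeomtail
          positivity
  -- combine
  have hfactor : r ^ J * (1 - r)⁻¹ ≤ 3 / α := by
    have hlog2pos : (0:ℝ) < Real.log 2 := by linarith
    have hpos : (0:ℝ) < α * Real.log 2 / 2 := div_pos (mul_pos hα0 hlog2pos) two_pos
    have hinv : (1 - r)⁻¹ ≤ (α * Real.log 2 / 2)⁻¹ := inv_anti₀ hpos h1r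
    have h1r0 : (0:ℝ) < 1 - r := by linarith
    have hprod : r ^ J * (1 - r)⁻¹ ≤ (1/2) * (α * Real.log 2 / 2)⁻¹ := by
      apply mul_le_mul hrJ hinv (by positivity) (by norm_num)
    have heq3 : (1/2 : ℝ) * (α * Real.log 2 / 2)⁻¹ = (α * Real.log 2)⁻¹ := by
      field_simp
    rw [heq3] at hprod
    have : (α * Real.log 2)⁻¹ ≤ 3 / α := by
      rw [inv_eq_one_div, div_le_div_iff₀ (by positivity) hα0]
      nlinarith [hα0.le, hlog2]
    linarith
  have hu : (0:ℝ) < 1/α := by positivity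
  calc ∑ j ∈ Finset.Icc 1 N, f j ≤ ∑ j ∈ Finset.Icc 1 J, f j + ∑ j ∈ Finset.Icc (J+1) N, f j :=
        hsplit
    _ ≤ (2/α) * φ t + a * φ t * (r ^ J * (1-r)⁻¹) := add_le_add hhead htail
    _ ≤ (2/α) * φ t + a * φ t * (3/α) := by
        apply add_le_add_right
        apply mul_le_mul_of_nonneg_left hfactor (by positivity)
    _ ≤ (5 * a / α) * φ t := by
        have h1 : (2/α) * φ t = 2 * (1/α) * φ t := by ring
        have h2 : a * φ t * (3/α) = 3 * a * (1/α) * φ t := by ring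
        have h3 : (5 * a / α) * φ t = 5 * a * (1/α) * φ t := by ring
        rw [h1, h2, h3]
        nlinarith [mul_nonneg (mul_nonneg hu.le hφt0) (by linarith : (0:ℝ) ≤ a - 1)]
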